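/- The partial sums ∑_{k=1}^n μ(k)/k are bounded in absolute value by 1 for all n ≥ 1. -/

import Mathlib

open ArithmeticFunction Finset
open ArithmeticFunction.Moebius

lemma key_identity (n : ℕ) (hn : 1 ≤ n) :
    ∑ d ∈ Finset.Ioc 0 n, (μ d : ℤ) * (n / d : ℕ) = 1 := by
  have h1 : ∀ d ∈ Finset.Ioc 0 n, (μ d : ℤ) * (n / d : ℕ)
      = ∑ k ∈ Finset.Ioc 0 n, if d ∣ k then (μ d : ℤ) else 0 := by
    intro d _
    rw [← Finset.sum_filter, Finset.sum_const, Nat.Ioc_filter_dvd_card_eq_div,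
      nsmul_eq_mul, mul_comm]
  rw [Finset.sum_congr rfl h1, Finset.sum_comm]
  have h2 : ∀ k ∈ Finset.Ioc 0 n, (∑ d ∈ Finset.Ioc 0 n, if d ∣ k then (μ d : ℤ) else 0)
      = if k = 1 then 1 else 0 := by
    intro k hk
    simp only [Finset.mem_Ioc] at hk
    rw [← Finset.sum_filter]
    have hfilt : (Finset.Ioc 0 n).filter (· ∣ k) = k.divisors := by
      ext d
      simp only [Finset.mem_filter, Finset.mem_Ioc, Nat.mem_divisors]
      constructor
      · rintro ⟨⟨hd0, _⟩, hdk⟩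
        exact ⟨hdk, hk.1.ne'⟩
      · rintro ⟨hdk, _⟩
        exact ⟨⟨Nat.pos_of_dvd_of_pos hdk hk.1, le_trans (Nat.le_of_dvd hk.1 hdk) hk.2⟩, hdk⟩
    rw [hfilt]
    rw [← coe_mul_zeta_apply, moebius_mul_coe_zeta, one_apply]
  rw [Finset.sum_congr rfl h2, Finset.sum_ite_eq' (Finset.Ioc 0 n) 1 (fun _ => (1 : ℤ))]
  simp [hn]

theorem abs_sum_moebius_div_le_one (n : ℕ) (hn : 1 ≤ n) :
    |∑ k ∈ Finset.Icc 1 n, (μ k : ℝ) / k| ≤ 1 := by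
  have hIcc : Finset.Icc 1 n = Finset.Ioc 0 n := rfl
  set S : ℝ := ∑ k ∈ Finset.Icc 1 n, (μ k : ℝ) / k with hS
  have hnpos : (0 : ℝ) < n := by exact_mod_cast hn
  -- n * S = 1 + ∑ μ k * frac(n/k)
  have hmain : (n : ℝ) * S = 1 + ∑ k ∈ Finset.Icc 1 n,
      (μ k : ℝ) * ((n : ℝ) / k - ((n / k : ℕ) : ℝ)) := by
    have hkeyZ := key_identity n hn
    have hkey : (∑ d ∈ Finset.Ioc 0 n, (μ d : ℝ) * ((n / d : ℕ) : ℝ)) = 1 := by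
      have : ((∑ d ∈ Finset.Ioc 0 n, (μ d : ℤ) * (n / d : ℕ) : ℤ) : ℝ) = 1 := by
        rw [hkeyZ]; norm_num
      rw [← this]
      push_cast
      rfl
    rw [hS, Finset.mul_sum, ← hkey, hIcc, ← Finset.sum_add_distrib]
    refine Finset.sum_congr rfl fun k hk => ?_
    simp only [Finset.mem_Ioc] at hk
    have hk0 : (k : ℝ) ≠ 0 := by exact_mod_cast hk.1.ne'
    field_simp
    ring
  have hbound : |∑ k ∈ Finset.Icc 1 n, (μ k : ℝ) * ((n : ℝ) / k - ((n / k : ℕ) : ℝ))|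
      ≤ (n : ℝ) - 1 := by
    calc |∑ k ∈ Finset.Icc 1 n, (μ k : ℝ) * ((n : ℝ) / k - ((n / k : ℕ) : ℝ))|
        ≤ ∑ k ∈ Finset.Icc 1 n, |(μ k : ℝ) * ((n : ℝ) / k - ((n / k : ℕ) : ℝ))| :=
          Finset.abs_sum_le_sum_abs _ _
      _ ≤ ∑ k ∈ Finset.Icc 1 n, (if k = 1 then 0 else 1) := by
          refine Finset.sum_le_sum fun k hk => ?_
          simp only [Finset.mem_Icc] at hk
          by_cases hk1 : k = 1
          · subst hk1
            simp [Nat.div_one]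
          · simp only [hk1, if_false]
            rw [abs_mul]
            have h1 : |(μ k : ℝ)| ≤ 1 := by
              have := @ArithmeticFunction.abs_moebius_le_one k
              exact_mod_cast this
            have h2 : |(n : ℝ) / k - ((n / k : ℕ) : ℝ)| ≤ 1 := by
              have hkpos : 0 < k := hk.1
              have hkR : (0 : ℝ) < k := by exact_mod_cast hkpos
              rw [abs_le]
              constructor
              · have : ((n / k : ℕ) : ℝ) ≤ (n : ℝ) / k := by
                  rw [le_div_iff₀ hkR]
                  exact_mod_cast Nat.div_mul_le_self n k
                linarith
              · have : (n : ℝ) / k < ((n / k : ℕ) : ℝ) + 1 := by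
                  rw [div_lt_iff₀ hkR]
                  have hdm := Nat.div_add_mod n k
                  have hml := Nat.mod_lt n hkpos
                  have : n < (n / k + 1) * k := by
                    calc n = k * (n / k) + n % k := hdm.symm
                      _ < k * (n / k) + k := by omega
                      _ = (n / k + 1) * k := by ring
                  exact_mod_cast this
                linarith
            calc |(μ k : ℝ)| * |(n : ℝ) / k - ((n / k : ℕ) : ℝ)| ≤ 1 * 1 := by
                  exact mul_le_mul h1 h2 (abs_nonneg _) zero_le_one
              _ = 1 := mul_one 1
      _ = (n : ℝ) - 1 := by
          have hcong : ∀ k ∈ Finset.Icc 1 n, (if k = 1 then (0:ℝ) else 1)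
              = 1 - (if k = 1 then (1:ℝ) else 0) := by
            intro k _; split <;> norm_num
          rw [Finset.sum_congr rfl hcong, Finset.sum_sub_distrib, Finset.sum_const,
            Finset.sum_ite_eq' (Finset.Icc 1 n) 1 (fun _ => (1:ℝ))]
          simp [hn, Nat.card_Icc]
  have : |(n : ℝ) * S| ≤ (n : ℝ) := by
    rw [hmain]
    calc |1 + ∑ k ∈ Finset.Icc 1 n, (μ k : ℝ) * ((n : ℝ) / k - ((n / k : ℕ) : ℝ))|
        ≤ 1 + |∑ k ∈ Finset.Icc 1 n, (μ k : ℝ) * ((n : ℝ) / k - ((n / k : ℕ) : ℝ))| := by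
          have := abs_add_le (1 : ℝ) (∑ k ∈ Finset.Icc 1 n, (μ k : ℝ) * ((n : ℝ) / k - ((n / k : ℕ) : ℝ)))
          simpa using this
      _ ≤ 1 + ((n : ℝ) - 1) := by linarith
      _ = (n : ℝ) := by ring
  rw [abs_mul, abs_of_pos hnpos] at this
  calc |S| = (n : ℝ) * |S| / n := by field_simp
    _ ≤ (n : ℝ) / n := by apply div_le_div_of_nonneg_right <;> first | linarith | exact hnpos
    _ = 1 := by field_simp
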